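/- Let M be an n×n symmetric real matrix whose comparison matrix M̄ is positive semidefinite. Then M itself is positive semidefinite. -/

import Mathlib

open Matrix

/-- The comparison matrix of a square matrix. -/
def comparisonMatrix {n : Type*} [DecidableEq n] (M : Matrix n n ℝ) : Matrix n n ℝ :=
  fun i j => if i = j then M i i else -|M i j|

theorem posSemidef_of_comparison_posSemidef
    {n : ℕ} (M : Matrix (Fin n) (Fin n) ℝ) (hsym : M.IsSymm)
    (hcmp : (comparisonMatrix M).PosSemidef) :
    M.PosSemidef := by
  rw [Matrix.posSemidef_iff_dotProduct_mulVec]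
  constructor
  · rwa [Matrix.IsHermitian, Matrix.conjTranspose_eq_transpose_of_trivial]
  · intro x
    set y : Fin n → ℝ := fun i => |x i| with hy
    have h0 : 0 ≤ y ⬝ᵥ (comparisonMatrix M) *ᵥ y := by simpa using hcmp.dotProduct_mulVec_nonneg y
    have hle : y ⬝ᵥ (comparisonMatrix M) *ᵥ y ≤ x ⬝ᵥ M *ᵥ x := by
      simp only [dotProduct, mulVec, Finset.mul_sum]
      apply Finset.sum_le_sum
      intro i _
      apply Finset.sum_le_sum
      intro j _
      by_cases hij : i = j
      · subst hij
        simp [comparisonMatrix, hy, mul_comm, mul_left_comm, abs_mul_abs_self]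
      · simp only [comparisonMatrix, hy, if_neg hij]
        have : -(|x i| * (|M i j| * |x j|)) ≤ x i * (M i j * x j) := by
          rw [← abs_mul, ← abs_mul]
          exact neg_abs_le _
        linarith
    simpa using le_trans h0 hle
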